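/- Let (Ω, F, P) be a probability space, X ⊆ ℝⁿ a measurable state space, Xs ⊆ X a measurable safe set with complement Xu, and X0 ⊆ Xs an initial set. Suppose g : X × Ω → ℝ is such that for each x, ω ↦ g(x,ω) is integrable and bounded above by M ≥ 1 uniformly in (x,ω). Let B : X → ℝ satisfy 0 ≤ B(x) ≤ M for all x, B(x) ≤ γ for x ∈ X0, B(x) ≥ 1 for x ∈ Xu. Fix ε ∈ (0,1), δ ≥ εM/(1-ε), and c ≥ 0. If for every x ∈ Xs, P{ω : g(x,ω) + δ ≤ B(x) + c} ≥ 1 - ε, then for every x ∈ Xs, E[g(x,·)] ≤ B(x) + c. -/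

import Mathlib

open MeasureTheory

theorem stmt_1 {Ω : Type*} [MeasurableSpace Ω] (P : Measure Ω) [IsProbabilityMeasure P]
    {n : ℕ} (X Xs X0 : Set (Fin n → ℝ))
    (hX : MeasurableSet X) (hXs : MeasurableSet Xs) (hXsX : Xs ⊆ X) (hX0 : X0 ⊆ Xs)
    (Xu : Set (Fin n → ℝ)) (hXu : Xu = X \ Xs)
    (g : (Fin n → ℝ) → Ω → ℝ)
    (hg_int : ∀ x ∈ X, Integrable (g x) P)
    (M : ℝ) (hM : 1 ≤ M) (hgM : ∀ x ∈ X, ∀ ω, g x ω ≤ M)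
    (B : (Fin n → ℝ) → ℝ)
    (hB_bnd : ∀ x ∈ X, B x ∈ Set.Icc (0:ℝ) M)
    (γ : ℝ) (hB_init : ∀ x ∈ X0, B x ≤ γ)
    (hB_unsafe : ∀ x ∈ Xu, 1 ≤ B x)
    (ε : ℝ) (hε : ε ∈ Set.Ioo (0:ℝ) 1)
    (δ : ℝ) (hδ : δ ≥ ε * M / (1 - ε))
    (c : ℝ) (hc : 0 ≤ c)
    (hP : ∀ x ∈ Xs, P {ω | g x ω + δ ≤ B x + c} ≥ ENNReal.ofReal (1 - ε)) :
    ∀ x ∈ Xs, ∫ ω, g x ω ∂P ≤ B x + c := by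
  obtain ⟨hε0, hε1⟩ := hε
  have h1ε : (0:ℝ) < 1 - ε := by linarith
  intro x hx
  have hxX : x ∈ X := hXsX hx
  have hi : Integrable (g x) P := hg_int x hxX
  -- measurable modification
  have hsm := hi.aestronglyMeasurable
  set f := hsm.mk (g x) with hf
  have hfe : g x =ᵐ[P] f := hsm.ae_eq_mk
  set A : Set Ω := {ω | g x ω + δ ≤ B x + c} with hA
  have hA'meas : MeasurableSet {ω | f ω + δ ≤ B x + c} :=
    measurableSet_le (hsm.stronglyMeasurable_mk.measurable.add_const δ) measurable_const
  have hAeq : A =ᵐ[P] {ω | f ω + δ ≤ B x + c} := by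
    filter_upwards [hfe] with ω hω
    show ((g x ω + δ ≤ B x + c) = (f ω + δ ≤ B x + c))
    rw [hω]
  have hAnm : NullMeasurableSet A P :=
    (hA'meas.nullMeasurableSet).congr hAeq.symm
  have hPAne : P A ≠ ⊤ := (measure_lt_top P A).ne
  set p : ℝ := (P A).toReal with hp
  have hp1 : p ≤ 1 := by
    have := prob_le_one (μ := P) (s := A)
    simpa [hp] using ENNReal.toReal_mono ENNReal.one_ne_top this
  have hpε : 1 - ε ≤ p := by
    have h := hP x hx
    rw [← hA] at h
    have := (ENNReal.ofReal_le_iff_le_toReal hPAne).mp h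
    simpa [hp] using this
  have hPc : (P Aᶜ).toReal = 1 - p := by
    rw [prob_compl_eq_one_sub₀ hAnm]
    rw [ENNReal.toReal_sub_of_le (prob_le_one) ENNReal.one_ne_top]
    simp [hp]
  -- split the integral
  have hsplit : ∫ ω, g x ω ∂P = (∫ ω in A, g x ω ∂P) + ∫ ω in Aᶜ, g x ω ∂P :=
    (integral_add_compl₀ hAnm hi).symm
  have hboundA : ∫ ω in A, g x ω ∂P ≤ (B x + c - δ) * p := by
    have : ∫ ω in A, g x ω ∂P ≤ ∫ _ in A, (B x + c - δ) ∂P := by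
      apply integral_mono_ae hi.integrableOn (integrableOn_const (measure_lt_top P A).ne)
      filter_upwards [ae_restrict_mem₀ hAnm] with ω hω
      have : g x ω + δ ≤ B x + c := hω
      linarith
    simpa [mul_comm, Measure.real, hp] using this
  have hboundAc : ∫ ω in Aᶜ, g x ω ∂P ≤ M * (1 - p) := by
    have : ∫ ω in Aᶜ, g x ω ∂P ≤ ∫ _ in Aᶜ, M ∂P := by
      apply integral_mono_ae hi.integrableOn (integrableOn_const (measure_lt_top P Aᶜ).ne)
      exact Filter.Eventually.of_forall fun ω => hgM x hxX ω
    simpa [Measure.real, hPc, mul_comm] using this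
  have hδM : ε * M ≤ δ * (1 - ε) := by
    rw [ge_iff_le, div_le_iff₀ h1ε] at hδ
    linarith
  have hB0 : 0 ≤ B x := (hB_bnd x hxX).1
  have hkey : (B x + c - δ) * p + M * (1 - p) ≤ B x + c := by
    rcases le_total (B x + c - δ) M with h | h
    · nlinarith [mul_le_mul_of_nonneg_left hpε (sub_nonneg.2 h)]
    · nlinarith [mul_le_mul_of_nonneg_left hp1 (sub_nonneg.2 h)]
  linarith [hsplit, hboundA, hboundAc, hkey]
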